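/- Assume ητ ≤ 1 and define, for each agent i, the auxiliary sequence ξ_i^(0)(a) = (Σ_{a'∈𝒜} exp(r_i^(0)(a')/τ)) · π_i^(0)(a) and ξ_i^(t+1)(a) = ξ_i^(t)(a)^{1−ητ} · exp(η r_i^(t)(a)). Then for every t ≥ 0, max_{a∈𝒜} |log ξ_i^(t+1)(a) − r_i^(t+1)(a)/τ| ≤ (1−ητ)^{t+1} · max_{a∈𝒜} |log ξ_i^(0)(a) − r_i^(0)(a)/τ| + τ^{−1} Σ_{s=0}^{t} (1−ητ)^{t−s} · √(J(π^(s+1), π^(s))). -/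

import Mathlib

open Finset

noncomputable section

/-- A probability distribution on a finite action set. -/
def IsDist {A : Type*} [Fintype A] (p : A → ℝ) : Prop :=
  (∀ a, 0 ≤ p a) ∧ ∑ a, p a = 1

/-- Shannon entropy of a distribution. -/
def entropy {A : Type*} [Fintype A] (p : A → ℝ) : ℝ :=
  -∑ a, p a * Real.log (p a)

/-- Kullback-Leibler divergence on a finite set. -/
def KLdiv {A : Type*} [Fintype A] (p q : A → ℝ) : ℝ :=
  ∑ a, p a * (Real.log (p a) - Real.log (q a))

/-- Jeffrey divergence: the symmetrized KL divergence. -/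
def Jdiv {A : Type*} [Fintype A] (p q : A → ℝ) : ℝ :=
  KLdiv p q + KLdiv q p

/-- Joint product distribution induced by a product policy. -/
def jointPmf {N : ℕ} {A : Type*} [Fintype A] (π : Fin N → A → ℝ) :
    (Fin N → A) → ℝ :=
  fun a => ∏ i, π i (a i)

/-- Expectation of `f` under the product policy `π`. -/
def expVal {N : ℕ} {A : Type*} [Fintype A] (π : Fin N → A → ℝ)
    (f : (Fin N → A) → ℝ) : ℝ :=
  ∑ a, jointPmf π a * f a

/-- Point mass at action `a`. -/
def pmfOf {A : Type*} [DecidableEq A] (a : A) : A → ℝ :=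
  fun b => if b = a then 1 else 0

/-- Marginalized utility `r_i^π(a) = E_{a_{-i} ∼ π_{-i}}[u_i(a, a_{-i})]`. -/
def margU {N : ℕ} {A : Type*} [Fintype A] [DecidableEq A]
    (u : Fin N → (Fin N → A) → ℝ) (π : Fin N → A → ℝ) (i : Fin N) (a : A) : ℝ :=
  expVal (Function.update π i (pmfOf a)) (u i)

/-- Entropy-regularized utility `u_{i,τ}(π) = u_i(π) + τ H(π_i)`. -/
def uReg {N : ℕ} {A : Type*} [Fintype A] (u : Fin N → (Fin N → A) → ℝ) (τ : ℝ)
    (i : Fin N) (π : Fin N → A → ℝ) : ℝ :=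
  expVal π (u i) + τ * entropy (π i)

/-- `QRE-gap_τ(π)`. -/
def QREgap {N : ℕ} {A : Type*} [Fintype A] [DecidableEq A]
    (u : Fin N → (Fin N → A) → ℝ) (τ : ℝ) (π : Fin N → A → ℝ) : ℝ :=
  sSup {x | ∃ (i : Fin N) (p : A → ℝ), IsDist p ∧
    x = uReg u τ i (Function.update π i p) - uReg u τ i π}

/-- `NE-gap(π)`. -/
def NEgap {N : ℕ} {A : Type*} [Fintype A] [DecidableEq A]
    (u : Fin N → (Fin N → A) → ℝ) (π : Fin N → A → ℝ) : ℝ :=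
  sSup {x | ∃ (i : Fin N) (p : A → ℝ), IsDist p ∧
    x = expVal (Function.update π i p) (u i) - expVal π (u i)}

/-- Entropy-regularized potential `Φ_τ(π) = Φ(π) + τ ∑_i H(π_i)`. -/
def regPot {N : ℕ} {A : Type*} [Fintype A] (Φ : (Fin N → A) → ℝ) (τ : ℝ)
    (π : Fin N → A → ℝ) : ℝ :=
  expVal π Φ + τ * ∑ i, entropy (π i)

/-- `Φ` is a potential function for the game with utilities `u`. -/
def IsPotential {N : ℕ} {A : Type*} [Fintype A] [DecidableEq A]
    (u : Fin N → (Fin N → A) → ℝ) (Φ : (Fin N → A) → ℝ) : Prop :=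
  ∀ (i : Fin N) (a : Fin N → A) (a' : A),
    u i a - u i (Function.update a i a') = Φ a - Φ (Function.update a i a')

/-- The independent entropy-regularized NPG update rule. -/
def NPGstep {N : ℕ} {A : Type*} [Fintype A] [DecidableEq A]
    (u : Fin N → (Fin N → A) → ℝ) (τ η : ℝ) (π : ℕ → Fin N → A → ℝ) : Prop :=
  ∀ t i a, π (t+1) i a =
    π t i a ^ (1 - η * τ) * Real.exp (η * margU u (π t) i a) /
      ∑ a', π t i a' ^ (1 - η * τ) * Real.exp (η * margU u (π t) i a')

/-- Best-response policy `π_i^⋆(a) ∝ exp(r_i^π(a)/τ)`. -/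
def bestResp {N : ℕ} {A : Type*} [Fintype A] [DecidableEq A]
    (u : Fin N → (Fin N → A) → ℝ) (τ : ℝ) (π : Fin N → A → ℝ) (i : Fin N) :
    A → ℝ :=
  fun a => Real.exp (margU u π i a / τ) / ∑ a', Real.exp (margU u π i a' / τ)


section AuxLemmas

variable {N : ℕ} {A : Type*} [Fintype A] [DecidableEq A]

lemma prod_split_at (i : Fin N) (h : Fin N → ℝ) :
    ∏ j, h j = h i * ∏ j : {j : Fin N // j ≠ i}, h (j : Fin N) := by
  rw [← Finset.mul_prod_erase Finset.univ h (Finset.mem_univ i)]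
  congr 1
  exact Finset.prod_subtype (Finset.univ.erase i)
    (fun j => by simp [Finset.mem_erase]) fun j => h j

lemma update_splitAt_symm (i : Fin N) (x a : A) (g : {j : Fin N // j ≠ i} → A) :
    Function.update ((Equiv.funSplitAt i A).symm (x, g)) i a
      = (Equiv.funSplitAt i A).symm (a, g) := by
  funext j
  by_cases hj : j = i
  · subst hj; simp
  · simp [Function.update, hj]

lemma expVal_update (π : Fin N → A → ℝ) (h1 : ∀ j, ∑ x, π j x = 1)
    (i : Fin N) (a : A) (f : (Fin N → A) → ℝ) :
    expVal (Function.update π i (pmfOf a)) f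
      = expVal π (fun b => f (Function.update b i a)) := by
  classical
  unfold expVal jointPmf
  set e := Equiv.funSplitAt i A with he
  rw [← Equiv.sum_comp e.symm fun b => (∏ j, Function.update π i (pmfOf a) j (b j)) * f b,
      ← Equiv.sum_comp e.symm fun b => (∏ j, π j (b j)) * f (Function.update b i a)]
  rw [Fintype.sum_prod_type, Fintype.sum_prod_type]
  have hA : ∀ (x : A) (g : {j : Fin N // j ≠ i} → A) (j : Fin N) (hj : j ≠ i),
      (e.symm (x, g)) j = g ⟨j, hj⟩ := by
    intro x g j hj
    simp [he, Equiv.funSplitAt, Equiv.piSplitAt, dif_neg hj]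
  have hAi : ∀ (x : A) (g : {j : Fin N // j ≠ i} → A), (e.symm (x, g)) i = x := by
    intro x g
    simp [he, Equiv.funSplitAt, Equiv.piSplitAt]
  have lhs : ∀ (x : A) (g : {j : Fin N // j ≠ i} → A),
      (∏ j, Function.update π i (pmfOf a) j ((e.symm (x, g)) j)) * f (e.symm (x, g))
        = (if x = a then (1:ℝ) else 0) *
            ((∏ j : {j : Fin N // j ≠ i}, π (j : Fin N) (g j)) * f (e.symm (x, g))) := by
    intro x g
    rw [prod_split_at i]
    have : ∀ j : {j : Fin N // j ≠ i},
        Function.update π i (pmfOf a) (j : Fin N) ((e.symm (x, g)) (j : Fin N))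
          = π (j : Fin N) (g j) := by
      intro j
      rw [Function.update_of_ne j.2, hA x g _ j.2]
    rw [Finset.prod_congr rfl fun j _ => this j, Function.update_self, hAi]
    simp only [pmfOf]
    ring
  have rhs : ∀ (x : A) (g : {j : Fin N // j ≠ i} → A),
      (∏ j, π j ((e.symm (x, g)) j)) * f (Function.update (e.symm (x, g)) i a)
        = π i x * ((∏ j : {j : Fin N // j ≠ i}, π (j : Fin N) (g j)) * f (e.symm (a, g))) := by
    intro x g
    rw [prod_split_at i]
    have : ∀ j : {j : Fin N // j ≠ i}, π (j : Fin N) ((e.symm (x, g)) (j : Fin N))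
        = π (j : Fin N) (g j) := fun j => by rw [hA x g _ j.2]
    rw [Finset.prod_congr rfl fun j _ => this j, hAi, update_splitAt_symm]
    ring
  calc ∑ x, ∑ g, (∏ j, Function.update π i (pmfOf a) j ((e.symm (x, g)) j)) * f (e.symm (x, g))
      = ∑ x, ∑ g : {j : Fin N // j ≠ i} → A, (if x = a then (1:ℝ) else 0) *
          ((∏ j : {j : Fin N // j ≠ i}, π (j : Fin N) (g j)) * f (e.symm (x, g))) := by
        exact Finset.sum_congr rfl fun x _ => Finset.sum_congr rfl fun g _ => lhs x g
    _ = ∑ g : {j : Fin N // j ≠ i} → A,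
          (∏ j : {j : Fin N // j ≠ i}, π (j : Fin N) (g j)) * f (e.symm (a, g)) := by
        rw [Finset.sum_comm]
        refine Finset.sum_congr rfl fun g _ => ?_
        simp only [ite_mul, one_mul, zero_mul, Finset.sum_ite_eq', Finset.mem_univ, if_true]
    _ = ∑ x, ∑ g : {j : Fin N // j ≠ i} → A, π i x *
          ((∏ j : {j : Fin N // j ≠ i}, π (j : Fin N) (g j)) * f (e.symm (a, g))) := by
        rw [Finset.sum_comm]
        refine Finset.sum_congr rfl fun g _ => ?_
        rw [← Finset.sum_mul, h1 i, one_mul]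
    _ = ∑ x, ∑ g, (∏ j, π j ((e.symm (x, g)) j)) * f (Function.update (e.symm (x, g)) i a) := by
        exact Finset.sum_congr rfl fun x _ => Finset.sum_congr rfl fun g _ => (rhs x g).symm

lemma jointPmf_sum_one (π : Fin N → A → ℝ) (h : ∀ j, ∑ x, π j x = 1) :
    ∑ b, jointPmf π b = 1 := by
  unfold jointPmf
  rw [← Fintype.prod_sum]
  simp [h]

lemma jointPmf_pos (π : Fin N → A → ℝ) (h : ∀ j x, 0 < π j x) (b : Fin N → A) :
    0 < jointPmf π b :=
  Finset.prod_pos fun j _ => h j (b j)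

lemma log_diff_ge {x y : ℝ} (hx : 0 < x) (hy : 0 < y) :
    (x - y) / x ≤ Real.log x - Real.log y := by
  have h := Real.log_le_sub_one_of_pos (div_pos hy hx)
  rw [Real.log_div hy.ne' hx.ne'] at h
  have hx' : x ≠ 0 := hx.ne'
  have : y / x - 1 = (y - x) / x := by field_simp
  rw [this] at h
  have h2 : (x - y) / x = -((y - x) / x) := by ring
  linarith

lemma point_ineq {x y : ℝ} (hx : 0 < x) (hy : 0 < y) :
    (x - y) ^ 2 / max x y ≤ (x - y) * (Real.log x - Real.log y) := by
  rcases le_total y x with h | h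
  · rw [max_eq_left h]
    have h1 := log_diff_ge hx hy
    have h2 : 0 ≤ x - y := by linarith
    calc (x - y) ^ 2 / x = (x - y) * ((x - y) / x) := by rw [sq, mul_div_assoc]
      _ ≤ (x - y) * (Real.log x - Real.log y) := mul_le_mul_of_nonneg_left h1 h2
  · rw [max_eq_right h]
    have h1 := log_diff_ge hy hx
    have h2 : 0 ≤ y - x := by linarith
    calc (x - y) ^ 2 / y = (y - x) * ((y - x) / y) := by rw [sq]; ring
      _ ≤ (y - x) * (Real.log y - Real.log x) := mul_le_mul_of_nonneg_left h1 h2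
      _ = (x - y) * (Real.log x - Real.log y) := by ring

lemma abs_expVal_sub (p q : Fin N → A → ℝ)
    (hp : ∀ j x, 0 < p j x) (hq : ∀ j x, 0 < q j x)
    (hps : ∀ j, ∑ x, p j x = 1) (hqs : ∀ j, ∑ x, q j x = 1)
    (f : (Fin N → A) → ℝ) (hf : ∀ b, 0 ≤ f b ∧ f b ≤ 1) :
    |expVal p f - expVal q f| ≤ Real.sqrt (Jdiv (jointPmf p) (jointPmf q)) := by
  classical
  set P := jointPmf p with hP
  set Q := jointPmf q with hQ
  have hPpos : ∀ b, 0 < P b := jointPmf_pos p hp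
  have hQpos : ∀ b, 0 < Q b := jointPmf_pos q hq
  have hPs : ∑ b, P b = 1 := jointPmf_sum_one p hps
  have hQs : ∑ b, Q b = 1 := jointPmf_sum_one q hqs
  set J := Jdiv P Q with hJ
  have hJeq : J = ∑ b, (P b - Q b) * (Real.log (P b) - Real.log (Q b)) := by
    rw [hJ]
    unfold Jdiv KLdiv
    rw [← Finset.sum_add_distrib]
    exact Finset.sum_congr rfl fun b _ => by ring
  have hpoint : ∀ b, (P b - Q b) ^ 2 / max (P b) (Q b)
      ≤ (P b - Q b) * (Real.log (P b) - Real.log (Q b)) :=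
    fun b => point_ineq (hPpos b) (hQpos b)
  have hterm_nonneg : ∀ b, (0:ℝ) ≤ (P b - Q b) ^ 2 / max (P b) (Q b) := by
    intro b
    exact div_nonneg (sq_nonneg _) (le_max_of_le_left (hPpos b).le)
  have hS_nonneg : 0 ≤ ∑ b, (P b - Q b) ^ 2 / max (P b) (Q b) :=
    Finset.sum_nonneg fun b _ => hterm_nonneg b
  have hSJ : ∑ b, (P b - Q b) ^ 2 / max (P b) (Q b) ≤ J := by
    rw [hJeq]; exact Finset.sum_le_sum fun b _ => hpoint b
  have hJ0 : 0 ≤ J := le_trans hS_nonneg hSJ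
  set L := ∑ b, |P b - Q b| with hL
  have hmaxpos : ∀ b, 0 < max (P b) (Q b) := fun b => lt_max_of_lt_left (hPpos b)
  have hCS : L ^ 2 ≤ 2 * J := by
    have key := Finset.sum_mul_sq_le_sq_mul_sq Finset.univ
      (fun b => Real.sqrt (max (P b) (Q b)))
      (fun b => |P b - Q b| / Real.sqrt (max (P b) (Q b)))
    have h1 : ∀ b : Fin N → A, Real.sqrt (max (P b) (Q b)) *
        (|P b - Q b| / Real.sqrt (max (P b) (Q b))) = |P b - Q b| := by
      intro b
      rw [mul_div_cancel₀]
      exact (Real.sqrt_pos.mpr (hmaxpos b)).ne'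
    have h2 : ∀ b : Fin N → A, Real.sqrt (max (P b) (Q b)) ^ 2 = max (P b) (Q b) :=
      fun b => Real.sq_sqrt (hmaxpos b).le
    have h3 : ∀ b : Fin N → A, (|P b - Q b| / Real.sqrt (max (P b) (Q b))) ^ 2
        = (P b - Q b) ^ 2 / max (P b) (Q b) := by
      intro b
      rw [div_pow, sq_abs, h2 b]
    rw [Finset.sum_congr rfl fun b _ => h1 b, Finset.sum_congr rfl fun b _ => h2 b,
        Finset.sum_congr rfl fun b _ => h3 b] at key
    have hmaxsum : ∑ b, max (P b) (Q b) ≤ 2 := by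
      have : ∀ b : Fin N → A, max (P b) (Q b) ≤ P b + Q b := by
        intro b
        exact max_le (by linarith [(hQpos b).le]) (by linarith [(hPpos b).le])
      calc ∑ b, max (P b) (Q b) ≤ ∑ b, (P b + Q b) := Finset.sum_le_sum fun b _ => this b
        _ = 2 := by rw [Finset.sum_add_distrib, hPs, hQs]; norm_num
    calc L ^ 2 ≤ (∑ b, max (P b) (Q b)) * ∑ b, (P b - Q b) ^ 2 / max (P b) (Q b) := key
      _ ≤ 2 * ∑ b, (P b - Q b) ^ 2 / max (P b) (Q b) :=
          mul_le_mul_of_nonneg_right hmaxsum hS_nonneg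
      _ ≤ 2 * J := by linarith
  have hD : expVal p f - expVal q f = ∑ b, (P b - Q b) * (f b - 1/2) := by
    unfold expVal
    rw [← hP, ← hQ]
    have : ∑ b, (P b - Q b) * (f b - 1/2)
        = (∑ b, P b * f b - ∑ b, Q b * f b) - (∑ b, P b - ∑ b, Q b) * (1/2) := by
      rw [← Finset.sum_sub_distrib, ← Finset.sum_sub_distrib, Finset.sum_mul,
        ← Finset.sum_sub_distrib]
      exact (Finset.sum_congr rfl fun b _ => by ring).symm
    rw [this, hPs, hQs]
    ring
  have habs : |expVal p f - expVal q f| ≤ L / 2 := by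
    rw [hD]
    calc |∑ b, (P b - Q b) * (f b - 1/2)| ≤ ∑ b, |(P b - Q b) * (f b - 1/2)| :=
        Finset.abs_sum_le_sum_abs _ _
      _ ≤ ∑ b, |P b - Q b| * (1/2) := by
          refine Finset.sum_le_sum fun b _ => ?_
          rw [abs_mul]
          refine mul_le_mul_of_nonneg_left ?_ (abs_nonneg _)
          rw [abs_le]
          constructor <;> [linarith [(hf b).1]; linarith [(hf b).2]]
      _ = L / 2 := by rw [← Finset.sum_mul, ← hL]; ring
  refine habs.trans ?_
  have hL0 : 0 ≤ L := Finset.sum_nonneg fun b _ => abs_nonneg _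
  rw [Real.le_sqrt (by linarith) hJ0]
  calc (L / 2) ^ 2 = L ^ 2 / 4 := by ring
    _ ≤ 2 * J / 4 := by linarith
    _ ≤ J := by linarith

lemma margU_diff (u : Fin N → (Fin N → A) → ℝ) (hu : ∀ i a, 0 ≤ u i a ∧ u i a ≤ 1)
    (p q : Fin N → A → ℝ)
    (hp : ∀ j x, 0 < p j x) (hq : ∀ j x, 0 < q j x)
    (hps : ∀ j, ∑ x, p j x = 1) (hqs : ∀ j, ∑ x, q j x = 1)
    (i : Fin N) (a : A) :
    |margU u p i a - margU u q i a| ≤ Real.sqrt (Jdiv (jointPmf p) (jointPmf q)) := by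
  unfold margU
  rw [expVal_update p hps i a (u i), expVal_update q hqs i a (u i)]
  exact abs_expVal_sub p q hp hq hps hqs _ fun b => hu i _

end AuxLemmas

/-- Recursion bound for the auxiliary sequence `ξ`. -/
theorem aux_sequence_bound
    {N : ℕ} (hN : 0 < N) {A : Type*} [Fintype A] [DecidableEq A] [Nonempty A]
    (u : Fin N → (Fin N → A) → ℝ) (hu : ∀ i a, 0 ≤ u i a ∧ u i a ≤ 1)
    (τ η : ℝ) (hτ : 0 < τ) (hη : 0 < η) (hητ : η * τ ≤ 1)
    (π : ℕ → Fin N → A → ℝ)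
    (hdist : ∀ i, IsDist (π 0 i)) (hpos : ∀ i a, 0 < π 0 i a)
    (hstep : NPGstep u τ η π)
    (ξ : ℕ → Fin N → A → ℝ)
    (hξ0 : ∀ i a, ξ 0 i a =
      (∑ a', Real.exp (margU u (π 0) i a' / τ)) * π 0 i a)
    (hξ : ∀ t i a, ξ (t + 1) i a =
      ξ t i a ^ (1 - η * τ) * Real.exp (η * margU u (π t) i a)) :
    ∀ (i : Fin N) (t : ℕ),
      (⨆ a : A, |Real.log (ξ (t + 1) i a) - margU u (π (t + 1)) i a / τ|) ≤
        (1 - η * τ) ^ (t + 1) *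
            (⨆ a : A, |Real.log (ξ 0 i a) - margU u (π 0) i a / τ|) +
          τ⁻¹ * ∑ s ∈ Finset.range (t + 1), (1 - η * τ) ^ (t - s) *
            Real.sqrt (Jdiv (jointPmf (π (s + 1))) (jointPmf (π s))) := by
  intro i
  have hτ' : τ ≠ 0 := hτ.ne'
  have h1mητ : (0:ℝ) ≤ 1 - η * τ := by linarith
  -- invariants of the policies
  have hinv : ∀ t, (∀ j x, 0 < π t j x) ∧ (∀ j, ∑ x, π t j x = 1) := by
    intro t
    induction t with
    | zero => exact ⟨fun j x => hpos j x, fun j => (hdist j).2⟩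
    | succ t ih =>
      obtain ⟨ihpos, ihsum⟩ := ih
      have hnum : ∀ j x, 0 < π t j x ^ (1 - η * τ) * Real.exp (η * margU u (π t) j x) :=
        fun j x => mul_pos (Real.rpow_pos_of_pos (ihpos j x) _) (Real.exp_pos _)
      have hden : ∀ j, 0 < ∑ x, π t j x ^ (1 - η * τ) * Real.exp (η * margU u (π t) j x) :=
        fun j => Finset.sum_pos (fun x _ => hnum j x) Finset.univ_nonempty
      refine ⟨fun j x => ?_, fun j => ?_⟩
      · rw [hstep t j x]; exact div_pos (hnum j x) (hden j)
      · rw [Finset.sum_congr rfl fun x _ => hstep t j x, ← Finset.sum_div]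
        exact div_self (hden j).ne'
  -- positivity of ξ
  have hξpos : ∀ t a, 0 < ξ t i a := by
    intro t
    induction t with
    | zero =>
      intro a
      rw [hξ0]
      exact mul_pos (Finset.sum_pos (fun x _ => Real.exp_pos _) Finset.univ_nonempty) (hpos i a)
    | succ t ih =>
      intro a
      rw [hξ]
      exact mul_pos (Real.rpow_pos_of_pos (ih a) _) (Real.exp_pos _)
  -- key pointwise recursion
  have hkey : ∀ t a, Real.log (ξ (t+1) i a) - margU u (π (t+1)) i a / τ
      = (1 - η * τ) * (Real.log (ξ t i a) - margU u (π t) i a / τ)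
        + (margU u (π t) i a - margU u (π (t+1)) i a) / τ := by
    intro t a
    have hlog : Real.log (ξ (t+1) i a)
        = (1 - η * τ) * Real.log (ξ t i a) + η * margU u (π t) i a := by
      rw [hξ, Real.log_mul (Real.rpow_pos_of_pos (hξpos t a) _).ne' (Real.exp_ne_zero _),
        Real.log_rpow (hξpos t a), Real.log_exp]
    rw [hlog]
    field_simp
    ring
  have hbdd : ∀ t, BddAbove (Set.range fun a : A =>
      |Real.log (ξ t i a) - margU u (π t) i a / τ|) :=
    fun t => Set.Finite.bddAbove (Set.finite_range _)
  -- one-step bound on the sup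
  have hstepM : ∀ t, (⨆ a : A, |Real.log (ξ (t+1) i a) - margU u (π (t+1)) i a / τ|)
      ≤ (1 - η * τ) * (⨆ a : A, |Real.log (ξ t i a) - margU u (π t) i a / τ|)
        + τ⁻¹ * Real.sqrt (Jdiv (jointPmf (π (t+1))) (jointPmf (π t))) := by
    intro t
    refine ciSup_le fun a => ?_
    rw [hkey t a]
    have hd : |margU u (π (t+1)) i a - margU u (π t) i a|
        ≤ Real.sqrt (Jdiv (jointPmf (π (t+1))) (jointPmf (π t))) :=
      margU_diff u hu (π (t+1)) (π t) (hinv (t+1)).1 (hinv t).1 (hinv (t+1)).2 (hinv t).2 i a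
    calc |(1 - η * τ) * (Real.log (ξ t i a) - margU u (π t) i a / τ)
          + (margU u (π t) i a - margU u (π (t+1)) i a) / τ|
        ≤ |(1 - η * τ) * (Real.log (ξ t i a) - margU u (π t) i a / τ)|
          + |(margU u (π t) i a - margU u (π (t+1)) i a) / τ| := abs_add_le _ _
      _ = (1 - η * τ) * |Real.log (ξ t i a) - margU u (π t) i a / τ|
          + τ⁻¹ * |margU u (π (t+1)) i a - margU u (π t) i a| := by
          rw [abs_mul, abs_of_nonneg h1mητ, abs_div, abs_of_pos hτ,
            abs_sub_comm (margU u (π t) i a) (margU u (π (t+1)) i a),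
            div_eq_inv_mul (|margU u (π (t+1)) i a - margU u (π t) i a|) τ]
      _ ≤ (1 - η * τ) * (⨆ a : A, |Real.log (ξ t i a) - margU u (π t) i a / τ|)
          + τ⁻¹ * Real.sqrt (Jdiv (jointPmf (π (t+1))) (jointPmf (π t))) := by
          refine add_le_add ?_ ?_
          · exact mul_le_mul_of_nonneg_left (le_ciSup (hbdd t) a) h1mητ
          · exact mul_le_mul_of_nonneg_left hd (inv_nonneg.mpr hτ.le)
  -- main induction
  intro t
  induction t with
  | zero => simpa using hstepM 0
  | succ t ih =>
    refine (hstepM (t+1)).trans ?_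
    have h3 := mul_le_mul_of_nonneg_left ih h1mητ
    have hsum : ∑ s ∈ Finset.range (t+1+1), (1 - η * τ) ^ (t+1-s) *
          Real.sqrt (Jdiv (jointPmf (π (s+1))) (jointPmf (π s)))
        = (1 - η * τ) * ∑ s ∈ Finset.range (t+1), (1 - η * τ) ^ (t-s) *
            Real.sqrt (Jdiv (jointPmf (π (s+1))) (jointPmf (π s)))
          + Real.sqrt (Jdiv (jointPmf (π (t+1+1))) (jointPmf (π (t+1)))) := by
      rw [Finset.sum_range_succ, Nat.sub_self, pow_zero, one_mul, Finset.mul_sum]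
      congr 1
      refine Finset.sum_congr rfl fun s hs => ?_
      rw [Finset.mem_range] at hs
      rw [show t+1-s = (t-s)+1 from Nat.succ_sub (Nat.lt_succ_iff.mp hs), pow_succ]
      ring
    rw [hsum]
    have hexp : (1 - η * τ) ^ (t+1+1) = (1 - η * τ) * (1 - η * τ) ^ (t+1) := by
      rw [pow_succ]; ring
    rw [hexp]
    set X := ⨆ a : A, |Real.log (ξ (t+1) i a) - margU u (π (t+1)) i a / τ| with hX
    set Y := (1 - η * τ) ^ (t+1) * (⨆ a : A, |Real.log (ξ 0 i a) - margU u (π 0) i a / τ|)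
      + τ⁻¹ * ∑ s ∈ Finset.range (t+1), (1 - η * τ) ^ (t-s) *
          Real.sqrt (Jdiv (jointPmf (π (s+1))) (jointPmf (π s))) with hY
    set Z := Real.sqrt (Jdiv (jointPmf (π (t+1+1))) (jointPmf (π (t+1)))) with hZ
    calc (1 - η * τ) * X + τ⁻¹ * Z ≤ (1 - η * τ) * Y + τ⁻¹ * Z := add_le_add_left h3 _
      _ = _ := by rw [hY]; ring
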